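/- Let a, k ∈ ℝ with k > 0 and γ ∈ ℝ with γ ≠ −4 and γ ≠ 0. Define u₁ᵉ = a + 2ε·ln(e^(−k/ε) + √(8 + e^(−2k/ε))), u₂ᵉ = a + ε·ln 2, and τ(ε) = e^(u₁ᵉ/ε) + γ·e^(u₂ᵉ/ε). Then lim_{ε→0⁺} ε·ln|τ(ε)| = a. -/

import Mathlib

open Filter Real

theorem stmt_6 (a k γ : ℝ) (hk : 0 < k) (hγ4 : γ ≠ -4) (hγ0 : γ ≠ 0) :
    let u₁ : ℝ → ℝ := fun ε => a + 2 * ε * Real.log (Real.exp (-k / ε) + Real.sqrt (8 + Real.exp (-2 * k / ε)))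
    let u₂ : ℝ → ℝ := fun ε => a + ε * Real.log 2
    let τ : ℝ → ℝ := fun ε => Real.exp (u₁ ε / ε) + γ * Real.exp (u₂ ε / ε)
    Tendsto (fun ε => ε * Real.log |τ ε|) (nhdsWithin 0 (Set.Ioi 0)) (nhds a) := by
  intro u₁ u₂ τ
  set g : ℝ → ℝ := fun ε =>
    (Real.exp (-k / ε) + Real.sqrt (8 + Real.exp (-2 * k / ε))) ^ 2 + 2 * γ with hgdef
  have h8 : (8 : ℝ) + 2 * γ ≠ 0 := by
    intro h
    apply hγ4
    linarith
  -- limits of the exponentials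
  have hinv : Tendsto (fun ε : ℝ => ε⁻¹) (nhdsWithin 0 (Set.Ioi 0)) atTop :=
    tendsto_inv_nhdsGT_zero
  have hx : Tendsto (fun ε => Real.exp (-k / ε)) (nhdsWithin 0 (Set.Ioi 0)) (nhds 0) := by
    apply Real.tendsto_exp_atBot.comp
    have h1 : Tendsto (fun ε : ℝ => k / ε) (nhdsWithin 0 (Set.Ioi 0)) atTop :=
      hinv.const_mul_atTop hk
    have := h1.const_mul_atTop_of_neg (show (-1 : ℝ) < 0 by norm_num)
    refine this.congr fun ε => by ring
  have hx2 : Tendsto (fun ε => Real.exp (-2 * k / ε)) (nhdsWithin 0 (Set.Ioi 0)) (nhds 0) := by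
    apply Real.tendsto_exp_atBot.comp
    have h1 : Tendsto (fun ε : ℝ => (2 * k) / ε) (nhdsWithin 0 (Set.Ioi 0)) atTop :=
      hinv.const_mul_atTop (by linarith)
    have := h1.const_mul_atTop_of_neg (show (-1 : ℝ) < 0 by norm_num)
    refine this.congr fun ε => by ring
  have hs : Tendsto (fun ε => Real.sqrt (8 + Real.exp (-2 * k / ε)))
      (nhdsWithin 0 (Set.Ioi 0)) (nhds (Real.sqrt 8)) := by
    have : Tendsto (fun ε => (8 : ℝ) + Real.exp (-2 * k / ε))
        (nhdsWithin 0 (Set.Ioi 0)) (nhds 8) := by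
      simpa using tendsto_const_nhds.add hx2
    exact (Real.continuous_sqrt.tendsto _).comp this
  have hgl : Tendsto g (nhdsWithin 0 (Set.Ioi 0)) (nhds (8 + 2 * γ)) := by
    have hb : Tendsto (fun ε => (Real.exp (-k / ε) + Real.sqrt (8 + Real.exp (-2 * k / ε))) ^ 2)
        (nhdsWithin 0 (Set.Ioi 0)) (nhds ((0 + Real.sqrt 8) ^ 2)) := (hx.add hs).pow 2
    have : ((0 : ℝ) + Real.sqrt 8) ^ 2 = 8 := by
      rw [zero_add, Real.sq_sqrt (by norm_num : (8:ℝ) ≥ 0)]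
    rw [this] at hb
    exact hb.add tendsto_const_nhds
  have hlog : Tendsto (fun ε => Real.log |g ε|) (nhdsWithin 0 (Set.Ioi 0))
      (nhds (Real.log |8 + 2 * γ|)) := by
    have habs : Tendsto (fun ε => |g ε|) (nhdsWithin 0 (Set.Ioi 0)) (nhds |8 + 2 * γ|) :=
      hgl.abs
    exact (Real.continuousAt_log (abs_ne_zero.mpr h8)).tendsto.comp habs
  have hε0 : Tendsto (fun ε : ℝ => ε) (nhdsWithin 0 (Set.Ioi 0)) (nhds 0) :=
    tendsto_id.mono_left nhdsWithin_le_nhds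
  have hmain : Tendsto (fun ε => a + ε * Real.log |g ε|) (nhdsWithin 0 (Set.Ioi 0)) (nhds a) := by
    have := (hε0.mul hlog).const_add a
    simpa using this
  refine Tendsto.congr' ?_ hmain
  filter_upwards [self_mem_nhdsWithin, hgl.eventually_ne h8] with ε hε hgne
  have hεpos : (0 : ℝ) < ε := hε
  have hεne : ε ≠ 0 := ne_of_gt hεpos
  set x := Real.exp (-k / ε) with hxdef
  set s := Real.sqrt (8 + Real.exp (-2 * k / ε)) with hsdef
  have hxs : 0 < x + s := add_pos_of_pos_of_nonneg (Real.exp_pos _) (Real.sqrt_nonneg _)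
  have hτ : τ ε = Real.exp (a / ε) * g ε := by
    have e1 : u₁ ε / ε = a / ε + 2 * Real.log (x + s) := by
      show (a + 2 * ε * Real.log (x + s)) / ε = _
      rw [show 2 * ε * Real.log (x + s) = ε * (2 * Real.log (x + s)) by ring, add_div,
        mul_div_cancel_left₀ _ hεne]
    have e2 : u₂ ε / ε = a / ε + Real.log 2 := by
      show (a + ε * Real.log 2) / ε = _
      rw [add_div, mul_div_cancel_left₀ _ hεne]
    have e3 : Real.exp (2 * Real.log (x + s)) = (x + s) ^ 2 := by
      rw [two_mul, Real.exp_add, Real.exp_log hxs, sq]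
    simp only [τ, e1, e2, Real.exp_add, e3, hgdef, Real.exp_log (by norm_num : (0:ℝ) < 2)]
    ring
  rw [hτ, abs_mul, abs_of_pos (Real.exp_pos _),
    Real.log_mul (Real.exp_ne_zero _) (abs_ne_zero.mpr hgne), Real.log_exp, mul_add,
    mul_div_cancel₀ _ hεne]
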